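/- Let α ∈ (0,1), k ∈ ℕ, and z ∈ ℂ with Re(z) > 0. Then the integral ∫_0^∞ u^{α−1} (log u)^k e^{−zu} du is absolutely convergent and equals z^{−α} ∑_{j=0}^{k} (−1)^j (log z)^j binom(k,j) F(α, k−j), where z^{−α} and log z are the principal branches and F(α, m) := ∫_0^∞ v^{α−1} (log v)^m e^{−v} dv (which is absolutely convergent for every m ∈ ℕ). -/

import Mathlib

open Filter MeasureTheory Set Topology
open scoped ENNReal NNReal

/-- `F(α, m) = ∫_0^∞ v^{α−1} (log v)^m e^{−v} dv`, a logarithmic variant of the Gamma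
function. -/
noncomputable def gammaLog (α : ℝ) (m : ℕ) : ℝ :=
  ∫ v in Set.Ioi (0 : ℝ), v ^ (α - 1) * Real.log v ^ m * Real.exp (-v)

section Stmt8Aux
open Complex Asymptotics
open scoped Real

namespace Stmt8

/-- integrand family: `t ↦ (log t)^k * exp(-z t)` -/
noncomputable def f (z : ℂ) (k : ℕ) (t : ℝ) : ℂ :=
  (Real.log t ^ k : ℝ) • Complex.exp (-z * t)

lemma f_smul (z : ℂ) (k : ℕ) :
    (fun t : ℝ => Real.log t • f z k t) = f z (k + 1) := by
  funext t
  simp only [f, smul_smul, pow_succ]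
  ring_nf

lemma f_contOn (z : ℂ) (k : ℕ) : ContinuousOn (f z k) (Ioi 0) := by
  apply ContinuousOn.fun_smul
  · exact ((Real.continuousOn_log.mono (by intro x hx; exact ne_of_gt hx)).pow k)
  · exact (Complex.continuous_exp.comp ((continuous_const.mul Complex.continuous_ofReal))).continuousOn

lemma f_loc (z : ℂ) (k : ℕ) : LocallyIntegrableOn (f z k) (Ioi 0) :=
  (f_contOn z k).locallyIntegrableOn measurableSet_Ioi

lemma f_norm {z : ℂ} (k : ℕ) {t : ℝ} :
    ‖f z k t‖ = |Real.log t| ^ k * Real.exp (-z.re * t) := by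
  simp only [f, norm_smul, Complex.norm_exp, Real.norm_eq_abs, _root_.abs_pow]
  congr 2
  simp

lemma f_top {z : ℂ} (hz : 0 < z.re) (k : ℕ) (a : ℝ) :
    f z k =O[atTop] (fun t : ℝ => t ^ (-a)) := by
  induction k generalizing a with
  | zero =>
    have h1 : (fun t : ℝ => f z 0 t) =O[atTop] (fun t => Real.exp (-z.re * t)) := by
      apply IsBigO.of_bound 1
      filter_upwards with t
      rw [one_mul, f_norm, pow_zero, one_mul, Real.norm_eq_abs, abs_of_pos (Real.exp_pos _)]
    exact h1.trans (isLittleO_exp_neg_mul_rpow_atTop hz (-a)).isBigO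
  | succ k ih =>
    rw [← f_smul]
    exact isBigO_rpow_top_log_smul (lt_add_one a) (ih (a + 1))

lemma f_bot {z : ℂ} (hz : 0 < z.re) (k : ℕ) {b : ℝ} (hb : 0 < b) :
    f z k =O[𝓝[>] (0:ℝ)] (fun t : ℝ => t ^ (-b)) := by
  induction k generalizing b with
  | zero =>
    apply IsBigO.of_bound 1
    filter_upwards [Ioo_mem_nhdsGT_of_mem (by constructor <;> norm_num : (0:ℝ) ∈ Ico (0:ℝ) 1)]
      with t ht
    rw [one_mul, f_norm, pow_zero, one_mul, Real.norm_eq_abs,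
      abs_of_pos (Real.rpow_pos_of_pos ht.1 _)]
    have h1 : Real.exp (-z.re * t) ≤ 1 := by
      rw [Real.exp_le_one_iff]
      nlinarith [ht.1]
    have h2 : (1:ℝ) ≤ t ^ (-b) := by
      exact Real.one_le_rpow_of_pos_of_le_one_of_nonpos ht.1 ht.2.le (by linarith)
    linarith
  | succ k ih =>
    rw [← f_smul]
    exact isBigO_rpow_zero_log_smul (half_lt_self hb) (ih (half_pos hb))

lemma f_conv {z : ℂ} (hz : 0 < z.re) (k : ℕ) {s : ℂ} (hs : 0 < s.re) :
    MellinConvergent (f z k) s :=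
  mellinConvergent_of_isBigO_rpow (f_loc z k) (f_top hz k (s.re + 1)) (lt_add_one _)
    (f_bot hz k (half_pos hs)) (half_lt_self hs)

lemma f_hasDerivAt {z : ℂ} (hz : 0 < z.re) (k : ℕ) {s : ℂ} (hs : 0 < s.re) :
    HasDerivAt (mellin (f z k)) (mellin (f z (k + 1)) s) s := by
  have h := mellin_hasDerivAt_of_isBigO_rpow (f_loc z k) (f_top hz k (s.re + 1)) (lt_add_one _)
    (f_bot hz k (half_pos hs)) (half_lt_self hs)
  rw [f_smul] at h
  exact h.2

lemma mellin_f_zero_eq (w : ℂ) (s : ℂ) :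
    mellin (f w 0) s = ∫ t in Ioi (0:ℝ), (t:ℂ) ^ (s - 1) * Complex.exp (-w * t) := by
  simp only [mellin, f, pow_zero, one_smul, smul_eq_mul]

lemma mellin_f_zero_real {s : ℂ} (hs : 0 < s.re) {r : ℝ} (hr : 0 < r) :
    mellin (f r 0) s = (r : ℂ) ^ (-s) * Complex.Gamma s := by
  rw [mellin_f_zero_eq]
  have h := Complex.integral_cpow_mul_exp_neg_mul_Ioi hs hr
  have h2 : ∀ t : ℝ, (t:ℂ) ^ (s - 1) * Complex.exp (-(r:ℂ) * t)
      = (t:ℂ) ^ (s - 1) * Complex.exp (-((r:ℂ) * t)) := by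
    intro t; rw [neg_mul]
  simp_rw [h2, h]
  congr 1
  rw [one_div, Complex.cpow_neg, Complex.inv_cpow]
  rw [Complex.arg_ofReal_of_nonneg hr.le]
  exact Real.pi_ne_zero.symm

lemma I_differentiableAt {s : ℂ} (hs : 0 < s.re) {w₀ : ℂ} (hw : 0 < w₀.re) :
    DifferentiableAt ℂ (fun w => mellin (f w 0) s) w₀ := by
  set F : ℂ → ℝ → ℂ := fun w t => (t:ℂ) ^ (s - 1) * Complex.exp (-w * t) with hF
  set F' : ℂ → ℝ → ℂ := fun w t => (t:ℂ) ^ (s - 1) * (-t * Complex.exp (-w * t)) with hF'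
  set ε : ℝ := w₀.re / 2 with hε
  have hε0 : 0 < ε := half_pos hw
  set bound : ℝ → ℝ := fun t => t ^ (s.re - 1) * (t * Real.exp (-ε * t)) with hbound
  have hcont : ∀ w : ℂ, ContinuousOn (F w) (Ioi 0) := by
    intro w
    apply ContinuousOn.mul
    · exact continuousOn_of_forall_continuousAt fun t ht =>
        continuousAt_ofReal_cpow_const _ _ (Or.inr (ne_of_gt ht))
    · exact (Complex.continuous_exp.comp
        (continuous_const.mul Complex.continuous_ofReal)).continuousOn
  have hmeas : ∀ᶠ w in 𝓝 w₀, AEStronglyMeasurable (F w) (volume.restrict (Ioi 0)) :=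
    Eventually.of_forall fun w => (hcont w).aestronglyMeasurable measurableSet_Ioi
  have hint : Integrable (F w₀) (volume.restrict (Ioi 0)) := by
    have := f_conv hw 0 hs
    refine this.congr (Eventually.of_forall fun t => ?_)
    simp [f, F, smul_eq_mul]
  have hmeas' : AEStronglyMeasurable (F' w₀) (volume.restrict (Ioi 0)) := by
    apply ContinuousOn.aestronglyMeasurable _ measurableSet_Ioi
    apply ContinuousOn.mul
    · exact continuousOn_of_forall_continuousAt fun t ht =>
        continuousAt_ofReal_cpow_const _ _ (Or.inr (ne_of_gt ht))
    · exact ((continuous_neg.comp Complex.continuous_ofReal).mul (Complex.continuous_exp.comp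
        (continuous_const.mul Complex.continuous_ofReal))).continuousOn
  have hbd : ∀ᵐ t ∂(volume.restrict (Ioi (0:ℝ))),
      ∀ w ∈ Metric.ball w₀ ε, ‖F' w t‖ ≤ bound t := by
    rw [ae_restrict_iff' measurableSet_Ioi]
    refine Eventually.of_forall fun t ht w hwb => ?_
    have ht0 : (0:ℝ) < t := ht
    have hre : ε ≤ w.re := by
      have h1 : |(w - w₀).re| ≤ ‖w - w₀‖ := Complex.abs_re_le_norm _
      rw [Metric.mem_ball, Complex.dist_eq] at hwb
      have := abs_le.mp (h1.trans hwb.le)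
      simp only [Complex.sub_re] at this
      have := this.1
      simp only [hε] at *
      linarith
    have hnorm : ‖F' w t‖ = t ^ (s.re - 1) * (t * Real.exp (-w.re * t)) := by
      simp only [F', norm_mul, norm_neg, Complex.norm_real, Real.norm_eq_abs,
        Complex.norm_exp, Complex.norm_cpow_eq_rpow_re_of_pos ht0, abs_of_pos ht0,
        Complex.neg_re, Complex.mul_re, Complex.ofReal_re, Complex.ofReal_im, mul_zero,
        sub_zero, neg_mul, map_mul, Complex.sub_re, Complex.one_re]
    rw [hnorm]
    simp only [bound]
    gcongr
  have hbint : Integrable bound (volume.restrict (Ioi (0:ℝ))) := by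
    have h := integrableOn_rpow_mul_exp_neg_mul_rpow (p := 1) (s := s.re) (b := ε)
      (by linarith) zero_lt_one hε0
    refine (h.congr_fun ?_ measurableSet_Ioi)
    intro t ht
    have ht0 : (0:ℝ) < t := ht
    simp only [bound, Real.rpow_one]
    rw [show s.re = (s.re - 1) + 1 by ring, Real.rpow_add ht0, Real.rpow_one]
    ring
  have hderiv : ∀ᵐ t ∂(volume.restrict (Ioi (0:ℝ))),
      ∀ w ∈ Metric.ball w₀ ε, HasDerivAt (fun w => F w t) (F' w t) w := by
    refine Eventually.of_forall fun t w _ => ?_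
    have h1 : HasDerivAt (fun w : ℂ => -w * (t:ℂ)) (-1 * t) w :=
      (hasDerivAt_id w).neg.mul_const _
    have h2 := h1.cexp
    have h3 := h2.const_mul ((t:ℂ) ^ (s - 1))
    refine h3.congr_deriv ?_
    simp only [F']
    ring
  have key := hasDerivAt_integral_of_dominated_loc_of_deriv_le (Metric.ball_mem_nhds w₀ hε0) hmeas hint hmeas' hbd
    hbint hderiv
  have heq : (fun w => mellin (f w 0) s) = fun w => ∫ t in Ioi (0:ℝ), F w t := by
    funext w
    rw [mellin_f_zero_eq]
  rw [heq]
  exact key.2.differentiableAt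

lemma mellin_f_zero {z : ℂ} (hz : 0 < z.re) {s : ℂ} (hs : 0 < s.re) :
    mellin (f z 0) s = z ^ (-s) * Complex.Gamma s := by
  set U : Set ℂ := {w : ℂ | 0 < w.re} with hU
  have hUo : IsOpen U := isOpen_lt continuous_const Complex.continuous_re
  have hUp : IsPreconnected U := (convex_halfSpace_re_gt 0).isPreconnected
  set I : ℂ → ℂ := fun w => mellin (f w 0) s with hI
  set J : ℂ → ℂ := fun w => w ^ (-s) * Complex.Gamma s with hJ
  have hId : AnalyticOnNhd ℂ I U := by
    apply DifferentiableOn.analyticOnNhd _ hUo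
    exact fun w hw => (I_differentiableAt hs hw).differentiableWithinAt
  have hJd : AnalyticOnNhd ℂ J U := by
    apply DifferentiableOn.analyticOnNhd _ hUo
    intro w hw
    refine DifferentiableAt.differentiableWithinAt ?_
    exact (((hasDerivAt_id w).cpow_const (Or.inl hw)).differentiableAt).mul_const _
  have hone : (1:ℂ) ∈ U := by simp [hU]
  have hfreq : ∃ᶠ w in 𝓝[≠] (1:ℂ), I w = J w := by
    have hseq : Filter.Tendsto (fun n : ℕ => ((1 + 1/(n+1) : ℝ) : ℂ)) atTop (𝓝[≠] (1:ℂ)) := by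
      apply tendsto_nhdsWithin_of_tendsto_nhds_of_eventually_within
      · have h1 : Filter.Tendsto (fun n : ℕ => (1 + 1/(n+1) : ℝ)) atTop (𝓝 1) := by
          have := tendsto_one_div_add_atTop_nhds_zero_nat (𝕜 := ℝ)
          simpa using tendsto_const_nhds.add this
        have h2 := (Complex.continuous_ofReal.tendsto 1).comp h1
        rw [Complex.ofReal_one] at h2
        exact Filter.Tendsto.congr (fun n => rfl) h2
      · refine Eventually.of_forall fun n => ?_
        simp only [Set.mem_compl_iff, Set.mem_singleton_iff]
        intro hcon
        have : ((1 + 1/(n+1) : ℝ) : ℂ).re = (1:ℂ).re := by rw [hcon]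
        simp only [Complex.ofReal_re, Complex.one_re] at this
        have hn : (0:ℝ) < 1/(n+1) := by positivity
        linarith
    apply hseq.frequently
    apply Filter.Frequently.of_forall
    intro n
    have hr : (0:ℝ) < 1 + 1/(n+1) := by positivity
    exact mellin_f_zero_real hs hr
  exact AnalyticOnNhd.eqOn_of_preconnected_of_frequently_eq hId hJd hUp hone hfreq hz

lemma pascal_sum (w : ℂ) (Ψ : ℕ → ℂ) (k : ℕ) :
    ∑ j ∈ Finset.range (k+2), w^j * (Nat.choose (k+1) j : ℂ) * Ψ (k+1-j)
      = w * (∑ j ∈ Finset.range (k+1), w^j * (Nat.choose k j : ℂ) * Ψ (k-j))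
        + ∑ j ∈ Finset.range (k+1), w^j * (Nat.choose k j : ℂ) * Ψ (k-j+1) := by
  rw [Finset.sum_range_succ' (fun j => w^j * (Nat.choose (k+1) j : ℂ) * Ψ (k+1-j)) (k+1),
      Finset.sum_range_succ' (fun j => w^j * (Nat.choose k j : ℂ) * Ψ (k-j+1)) k,
      Finset.mul_sum]
  have e1 : ∀ j ∈ Finset.range (k+1),
      w^(j+1) * (Nat.choose (k+1) (j+1) : ℂ) * Ψ (k+1-(j+1))
      = w * (w^j * (Nat.choose k j : ℂ) * Ψ (k-j))
        + w^(j+1) * (Nat.choose k (j+1) : ℂ) * Ψ (k-j) := by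
    intro j hj
    rw [Nat.succ_sub_succ, Nat.choose_succ_succ']
    push_cast
    ring
  rw [Finset.sum_congr rfl e1, Finset.sum_add_distrib,
      Finset.sum_range_succ (fun j => w^(j+1) * (Nat.choose k (j+1) : ℂ) * Ψ (k-j)) k]
  have e2 : ∀ j ∈ Finset.range k,
      w^(j+1) * (Nat.choose k (j+1) : ℂ) * Ψ (k-(j+1)+1)
      = w^(j+1) * (Nat.choose k (j+1) : ℂ) * Ψ (k-j) := by
    intro j hj
    rw [Finset.mem_range] at hj
    congr 2
    omega
  rw [Finset.sum_congr rfl e2]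
  simp [Nat.choose_succ_self]
  ring

lemma key {z : ℂ} (hz : 0 < z.re) (k : ℕ) : ∀ s : ℂ, 0 < s.re →
    mellin (f z k) s = z ^ (-s) * ∑ j ∈ Finset.range (k + 1),
      (-Complex.log z) ^ j * (Nat.choose k j : ℂ) * mellin (f 1 (k - j)) s := by
  have h1 : 0 < (1:ℂ).re := by norm_num
  induction k with
  | zero =>
    intro s hs
    rw [mellin_f_zero hz hs, Finset.sum_range_one]
    simp [mellin_f_zero h1 hs]
  | succ k ih =>
    intro s hs
    set L := Complex.log z with hL
    have hz' : z ≠ 0 := by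
      intro h
      rw [h] at hz
      simp at hz
    have hcp : HasDerivAt (fun s : ℂ => z ^ (-s)) (-L * z ^ (-s)) s := by
      have hinner : HasDerivAt (fun s : ℂ => L * (-s)) (L * (-1)) s :=
        ((hasDerivAt_id s).neg).const_mul L
      have h2 := hinner.cexp
      have heq : (fun s : ℂ => z ^ (-s)) = fun s : ℂ => Complex.exp (L * (-s)) :=
        funext fun s => Complex.cpow_def_of_ne_zero hz' _
      rw [heq]
      refine h2.congr_deriv ?_
      rw [← Complex.cpow_def_of_ne_zero hz']
      ring
    have hS : HasDerivAt
        (fun s => ∑ j ∈ Finset.range (k+1),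
          (-L)^j * (Nat.choose k j : ℂ) * mellin (f 1 (k-j)) s)
        (∑ j ∈ Finset.range (k+1),
          (-L)^j * (Nat.choose k j : ℂ) * mellin (f 1 (k-j+1)) s) s := by
      apply HasDerivAt.fun_sum
      intro j hj
      exact (f_hasDerivAt h1 (k-j) hs).const_mul _
    have hR := hcp.mul hS
    have hev : (fun s => z ^ (-s) * ∑ j ∈ Finset.range (k+1),
        (-L)^j * (Nat.choose k j : ℂ) * mellin (f 1 (k-j)) s) =ᶠ[𝓝 s] mellin (f z k) := by
      have hUo : IsOpen {w : ℂ | 0 < w.re} := isOpen_lt continuous_const Complex.continuous_re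
      filter_upwards [hUo.mem_nhds hs] with w hw
      exact (ih w hw).symm
    have hR' : HasDerivAt (mellin (f z k))
        (-L * z ^ (-s) * (∑ j ∈ Finset.range (k+1),
          (-L)^j * (Nat.choose k j : ℂ) * mellin (f 1 (k-j)) s)
         + z ^ (-s) * ∑ j ∈ Finset.range (k+1),
          (-L)^j * (Nat.choose k j : ℂ) * mellin (f 1 (k-j+1)) s) s :=
      hR.congr_of_eventuallyEq hev.symm
    have hD := (f_hasDerivAt hz k hs).unique hR'
    rw [hD]
    have hP := pascal_sum (-L) (fun m => mellin (f 1 m) s) k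
    rw [show k + 1 + 1 = k + 2 from rfl, hP]
    ring

lemma integrand_eq' (α : ℝ) (z : ℂ) (k : ℕ) : ∀ t ∈ Ioi (0:ℝ),
    (t:ℂ) ^ ((α:ℂ) - 1) • f z k t
      = ((t ^ (α-1) * Real.log t ^ k : ℝ) : ℂ) * Complex.exp (-z * t) := by
  intro t ht
  have h1 : ((α:ℂ) - 1) = ((α - 1 : ℝ) : ℂ) := by push_cast; ring
  rw [h1, ← Complex.ofReal_cpow (le_of_lt ht)]
  simp only [f, Complex.real_smul, smul_eq_mul]
  push_cast
  ring

lemma integrand_eq (α : ℝ) (m : ℕ) : ∀ t ∈ Ioi (0:ℝ),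
    (t:ℂ) ^ ((α:ℂ) - 1) • f 1 m t
      = ((t ^ (α-1) * Real.log t ^ m * Real.exp (-t) : ℝ) : ℂ) := by
  intro t ht
  rw [integrand_eq' α 1 m t ht]
  have h2 : Complex.exp (-1 * (t:ℂ)) = ((Real.exp (-t) : ℝ) : ℂ) := by
    rw [Complex.ofReal_exp]
    push_cast
    ring_nf
  rw [h2]
  push_cast
  ring

lemma gammaLog_integrable {α : ℝ} (hα : 0 < α) (m : ℕ) :
    IntegrableOn (fun v : ℝ => v ^ (α-1) * Real.log v ^ m * Real.exp (-v)) (Ioi 0) := by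
  have h := f_conv (z := 1) (by norm_num) m (s := (α:ℂ)) (by simpa using hα)
  have h2 : Integrable
      (fun t : ℝ => ((t ^ (α-1) * Real.log t ^ m * Real.exp (-t) : ℝ) : ℂ))
      (volume.restrict (Ioi 0)) := by
    refine h.congr ?_
    exact (ae_restrict_iff' measurableSet_Ioi).mpr
      (Eventually.of_forall fun t ht => integrand_eq α m t ht)
  have h3 := h2.re
  refine h3.congr (Eventually.of_forall fun t => ?_)
  simp only [RCLike.re_to_complex, Complex.ofReal_re]

lemma mellin_f_one_eq {α : ℝ} (hα : 0 < α) (m : ℕ) :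
    mellin (f 1 m) ((α:ℝ):ℂ) = ((gammaLog α m : ℝ) : ℂ) := by
  rw [mellin, gammaLog,
    setIntegral_congr_fun measurableSet_Ioi (integrand_eq α m)]
  exact integral_ofReal

end Stmt8

end Stmt8Aux

/-- For `α ∈ (0,1)`, `k ∈ ℕ` and `z ∈ ℂ` with `Re z > 0`, the integral
`∫_0^∞ u^{α−1} (log u)^k e^{−zu} du` is absolutely convergent and equals
`z^{−α} ∑_{j=0}^k (−1)^j (log z)^j C(k,j) F(α, k−j)` (principal branches), where each
`F(α, m)` is given by an absolutely convergent integral. -/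
theorem stmt_8 (α : ℝ) (hα0 : 0 < α) (hα1 : α < 1) (k : ℕ) (z : ℂ) (hz : 0 < z.re) :
    (∀ m : ℕ, IntegrableOn
      (fun v : ℝ => v ^ (α - 1) * Real.log v ^ m * Real.exp (-v)) (Set.Ioi 0)) ∧
    IntegrableOn
      (fun u : ℝ => ((u ^ (α - 1) * Real.log u ^ k : ℝ) : ℂ) * Complex.exp (-z * u))
      (Set.Ioi 0) ∧
    (∫ u in Set.Ioi (0 : ℝ), ((u ^ (α - 1) * Real.log u ^ k : ℝ) : ℂ) * Complex.exp (-z * u))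
      = z ^ (-(α : ℂ)) * ∑ j ∈ Finset.range (k + 1),
          (-1 : ℂ) ^ j * Complex.log z ^ j * (Nat.choose k j : ℂ) * (gammaLog α (k - j) : ℂ) := by
  have hsα : 0 < ((α : ℂ)).re := by simpa using hα0
  refine ⟨fun m => Stmt8.gammaLog_integrable hα0 m, ?_, ?_⟩
  · have h := Stmt8.f_conv hz k hsα
    refine h.congr ?_
    exact (ae_restrict_iff' measurableSet_Ioi).mpr
      (Eventually.of_forall fun t ht => Stmt8.integrand_eq' α z k t ht)
  · have heq : (∫ u in Set.Ioi (0:ℝ),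
        ((u ^ (α - 1) * Real.log u ^ k : ℝ) : ℂ) * Complex.exp (-z * u))
        = mellin (Stmt8.f z k) ((α:ℝ):ℂ) := by
      rw [mellin]
      exact (setIntegral_congr_fun measurableSet_Ioi (Stmt8.integrand_eq' α z k)).symm
    rw [heq, Stmt8.key hz k _ hsα]
    have hterm : ∀ j ∈ Finset.range (k+1),
        (-Complex.log z) ^ j * (Nat.choose k j : ℂ) * mellin (Stmt8.f 1 (k - j)) ((α:ℝ):ℂ)
        = (-1:ℂ) ^ j * Complex.log z ^ j * (Nat.choose k j : ℂ) * ((gammaLog α (k - j) : ℝ) : ℂ) := by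
      intro j hj
      rw [Stmt8.mellin_f_one_eq hα0 (k - j), neg_pow]
    rw [Finset.sum_congr rfl hterm]
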